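/- Let P > 0, N > 0 be reals, let α satisfy P/(P+N) < α < 1, let κ satisfy 0 < κ and α·κ ≤ P, let (h,k) ∈ S(α,κ), and let t satisfy 0 ≤ t < α·N/(α·N + (1−α)·P). Assume additionally that t·((1−α)·κ/N) + (1−t)·(1 − α·κ/P) ≤ t·h + (1−t)·(1−k), i.e., the normalized cost of (h,k) is at least the normalized cost of v_{ακ} = ((1−α)·κ/N, α·κ/P). Then the two-dimensional Lebesgue measure of the set {(x,y) ∈ S(α,κ) : t·x + (1−t)·(1−y) > t·h + (1−t)·(1−k)} equals (1−α)·P·((1−t)·k − t·h)² / (2·(1−t)·(α·N − (α·N + (1−α)·P)·t)). (In this case the set of lesser feasible classifiers of (h,k) is the triangle with vertices (0,0), the intersection of ℓ_t with the minimum precision line, and the intersection of ℓ_t with the y-axis.) -/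

import Mathlib

open MeasureTheory
open intervalIntegral

theorem vol_aux (m d b : ℝ) (hd : 0 < d) (hb : 0 ≤ b) :
    volume {p : ℝ × ℝ | p.1 ∈ Set.Icc 0 b ∧
      p.2 ∈ Set.Ico (m * p.1) (m * p.1 + d * (b - p.1))} =
    ENNReal.ofReal (d * b ^ 2 / 2) := by
  set S := {p : ℝ × ℝ | p.1 ∈ Set.Icc 0 b ∧
      p.2 ∈ Set.Ico (m * p.1) (m * p.1 + d * (b - p.1))} with hSdef
  have hS : MeasurableSet S := by
    apply MeasurableSet.inter
    · exact (measurableSet_Icc.preimage measurable_fst)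
    · apply MeasurableSet.inter
      · exact measurableSet_le (f := fun p : ℝ × ℝ => m * p.1) (g := fun p : ℝ × ℝ => p.2) (by fun_prop) (by fun_prop)
      · exact measurableSet_lt (f := fun p : ℝ × ℝ => p.2) (g := fun p : ℝ × ℝ => m * p.1 + d * (b - p.1)) (by fun_prop) (by fun_prop)
  rw [Measure.volume_eq_prod, Measure.prod_apply hS]
  have hsec : ∀ x : ℝ, volume (Prod.mk x ⁻¹' S) =
      (Set.Icc (0:ℝ) b).indicator (fun x => ENNReal.ofReal (d * (b - x))) x := by
    intro x
    by_cases hx : x ∈ Set.Icc (0:ℝ) b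
    · have hpre : Prod.mk x ⁻¹' S = Set.Ico (m * x) (m * x + d * (b - x)) := by
        ext y
        simp only [hSdef, Set.mem_preimage, Set.mem_setOf_eq, Set.mem_Ico]
        exact and_iff_right hx
      rw [hpre, Real.volume_Ico, Set.indicator_of_mem hx]
      ring_nf
    · have hpre : Prod.mk x ⁻¹' S = ∅ := by
        ext y
        simp only [hSdef, Set.mem_preimage, Set.mem_setOf_eq, Set.mem_empty_iff_false,
          iff_false, not_and]
        exact fun h1 _ => absurd h1 hx
      rw [hpre, Set.indicator_of_notMem hx]; simp
  simp_rw [hsec]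
  rw [lintegral_indicator measurableSet_Icc]
  rw [← ofReal_integral_eq_lintegral_ofReal]
  · rw [MeasureTheory.integral_Icc_eq_integral_Ioc,
      ← intervalIntegral.integral_of_le hb]
    have : ∫ x in (0:ℝ)..b, d * (b - x) = d * b ^ 2 / 2 := by
      have h1 : ∫ x in (0:ℝ)..b, x = (b ^ 2 - 0 ^ 2) / 2 := integral_id
      rw [intervalIntegral.integral_const_mul, integral_sub intervalIntegrable_const intervalIntegrable_id, h1]
      simp
      ring
    rw [this]
  · apply Continuous.integrableOn_Icc; fun_prop
  · filter_upwards [self_mem_ae_restrict measurableSet_Icc] with x hx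
    exact mul_nonneg hd.le (by linarith [hx.2])

/-- Partial area of lesser classifiers, triangle case. -/
theorem partial_area_triangle_case
    (P N α κ : ℝ) (hP : 0 < P) (hN : 0 < N)
    (hαlo : P / (P + N) < α) (hα1 : α < 1) (hκ0 : 0 < κ) (hκ : α * κ ≤ P)
    (h k : ℝ)
    (hfeas : ((h, k) : ℝ × ℝ) ∈
      {v : ℝ × ℝ | v.1 ∈ Set.Icc (0:ℝ) 1 ∧ v.2 ∈ Set.Icc (0:ℝ) 1 ∧
        (1 - α) * P * v.2 ≥ α * N * v.1 ∧ P * v.2 + N * v.1 ≤ κ})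
    (t : ℝ) (ht0 : 0 ≤ t) (ht1 : t < α * N / (α * N + (1 - α) * P))
    (hcost : t * ((1 - α) * κ / N) + (1 - t) * (1 - α * κ / P) ≤
      t * h + (1 - t) * (1 - k)) :
    volume {v : ℝ × ℝ | (v.1 ∈ Set.Icc (0:ℝ) 1 ∧ v.2 ∈ Set.Icc (0:ℝ) 1 ∧
        (1 - α) * P * v.2 ≥ α * N * v.1 ∧ P * v.2 + N * v.1 ≤ κ) ∧
        t * v.1 + (1 - t) * (1 - v.2) > t * h + (1 - t) * (1 - k)} =
      ENNReal.ofReal ((1 - α) * P * ((1 - t) * k - t * h) ^ 2 /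
        (2 * (1 - t) * (α * N - (α * N + (1 - α) * P) * t))) := by
  obtain ⟨⟨hh0, hh1⟩, ⟨hk0, hk1⟩, hprec, hcap⟩ := hfeas
  simp only at hprec hcap hh0 hh1 hk0 hk1
  -- basic positivity
  have hPN : 0 < P + N := by linarith
  have hα0 : 0 < α := lt_trans (div_pos hP hPN) hαlo
  have hαP : 0 < (1 - α) * P := mul_pos (by linarith) hP
  have hαN : (1 - α) * P < α * N := by
    rw [div_lt_iff₀ hPN] at hαlo; linarith
  have hden : 0 < α * N + (1 - α) * P := by linarith [mul_pos hα0 hN]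
  have ht1' : t < 1 := lt_of_lt_of_le ht1 (by
    rw [div_le_one hden]; linarith)
  have h1t : 0 < 1 - t := by linarith
  have hD : 0 < α * N - (α * N + (1 - α) * P) * t := by
    rw [lt_div_iff₀ hden] at ht1; linarith
  -- key quantities
  obtain ⟨m, hm_def⟩ : ∃ _x : ℝ, _x = α * N / ((1 - α) * P) := ⟨_, rfl⟩
  obtain ⟨s, hs_def⟩ : ∃ _x : ℝ, _x = t / (1 - t) := ⟨_, rfl⟩
  have hm : m * ((1 - α) * P) = α * N := by
    rw [hm_def]; exact div_mul_cancel₀ _ (ne_of_gt hαP)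
  have hs : s * (1 - t) = t := by
    rw [hs_def]; exact div_mul_cancel₀ _ (ne_of_gt h1t)
  have hm0 : 0 < m := hm_def ▸ div_pos (mul_pos hα0 hN) hαP
  have hs0 : 0 ≤ s := hs_def ▸ div_nonneg ht0 h1t.le
  obtain ⟨d, hd_def⟩ : ∃ _x : ℝ, _x = m - s := ⟨_, rfl⟩
  have hd0 : 0 < d := by
    rw [hd_def, sub_pos, hs_def, hm_def, div_lt_div_iff₀ h1t hαP]; linarith
  obtain ⟨y0, hy0_def⟩ : ∃ _x : ℝ, _x = k - s * h := ⟨_, rfl⟩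
  have hkmh : m * h ≤ k := by
    rw [← mul_le_mul_iff_left₀ hαP]
    have h1 : m * ((1 - α) * P) * h = α * N * h := by rw [hm]
    linarith [hprec, h1]
  have hsm : s ≤ m := by linarith [hd_def, hd0]
  have hy0 : 0 ≤ y0 := by
    rw [hy0_def]
    have h2 : s * h ≤ m * h := mul_le_mul_of_nonneg_right hsm hh0
    linarith
  obtain ⟨b, hb_def⟩ : ∃ _x : ℝ, _x = y0 / d := ⟨_, rfl⟩
  have hdb : d * b = y0 := by rw [hb_def]; exact mul_div_cancel₀ _ (ne_of_gt hd0)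
  have hb0 : 0 ≤ b := hb_def ▸ div_nonneg hy0 hd0.le
  obtain ⟨xv, hxv_def⟩ : ∃ _x : ℝ, _x = (1 - α) * κ / N := ⟨_, rfl⟩
  obtain ⟨yv, hyv_def⟩ : ∃ _x : ℝ, _x = α * κ / P := ⟨_, rfl⟩
  have hmxv : m * xv = yv := by
    have hα1' : (1:ℝ) - α ≠ 0 := ne_of_gt (by linarith)
    rw [hm_def, hxv_def, hyv_def]; field_simp
  have hyv1 : yv ≤ 1 := by rw [hyv_def, div_le_one hP]; linarith
  have hxv1 : xv < 1 := by
    rw [hxv_def, div_lt_one hN]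
    have h1 : (1 - α) * (α * κ) ≤ (1 - α) * P := mul_le_mul_of_nonneg_left hκ (by linarith)
    have h2 : α * ((1 - α) * κ) < α * N := by
      linarith [h1, hαN, (by ring : α * ((1 - α) * κ) = (1 - α) * (α * κ))]
    exact (mul_lt_mul_iff_right₀ hα0).mp h2
  -- v_ακ is above the iso-performance line: b ≤ xv
  have hcost' : (1 - t) * y0 ≤ (1 - t) * (d * xv) := by
    have h1 : (1 - t) * y0 = (1 - t) * k - t * h := by
      linear_combination (1 - t) * hy0_def - h * hs
    have h2 : (1 - t) * yv - t * xv = (1 - t) * (d * xv) := by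
      linear_combination (t - 1) * hmxv + xv * hs + (t - 1) * xv * hd_def
    have h3 : (1 - t) * k - t * h ≤ (1 - t) * yv - t * xv := by
      rw [hyv_def, hxv_def]; linarith [hcost]
    linarith
  have hbxv : b ≤ xv := by
    have h1 : d * b ≤ d * xv := by
      rw [hdb]; exact (mul_le_mul_iff_right₀ h1t).mp hcost'
    exact (mul_le_mul_iff_right₀ hd0).mp h1
  -- the set equality
  have hset : {v : ℝ × ℝ | (v.1 ∈ Set.Icc (0:ℝ) 1 ∧ v.2 ∈ Set.Icc (0:ℝ) 1 ∧
        (1 - α) * P * v.2 ≥ α * N * v.1 ∧ P * v.2 + N * v.1 ≤ κ) ∧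
        t * v.1 + (1 - t) * (1 - v.2) > t * h + (1 - t) * (1 - k)} =
      {p : ℝ × ℝ | p.1 ∈ Set.Icc 0 b ∧
        p.2 ∈ Set.Ico (m * p.1) (m * p.1 + d * (b - p.1))} := by
    ext ⟨x, y⟩
    simp only [Set.mem_setOf_eq, Set.mem_Icc, Set.mem_Ico]
    have hform : m * x + d * (b - x) = s * x + y0 := by
      linear_combination hdb - x * hd_def
    have heq : (1 - t) * (s * x + y0) = t * x + (1 - t) * k - t * h := by
      linear_combination (x - h) * hs + (1 - t) * hy0_def
    rw [hform]
    constructor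
    · rintro ⟨⟨⟨hx0, hx1⟩, ⟨hy0', hy1⟩, hpr, hcp⟩, hc⟩
      have hlt : y < s * x + y0 := by
        rw [← mul_lt_mul_iff_right₀ h1t]; linarith [hc, heq]
      have hmx : m * x ≤ y := by
        rw [← mul_le_mul_iff_left₀ hαP]
        have h1 : m * ((1 - α) * P) * x = α * N * x := by rw [hm]
        linarith [hpr, h1]
      refine ⟨⟨hx0, ?_⟩, hmx, hlt⟩
      rw [hb_def, le_div_iff₀ hd0]
      have h1 : x * d = x * m - x * s := by rw [hd_def]; ring
      linarith [hmx, hlt, h1]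
    · rintro ⟨⟨hx0, hxb⟩, hmx, hlt⟩
      have hxxv : x ≤ xv := le_trans hxb hbxv
      have hy0' : 0 ≤ y := le_trans (mul_nonneg hm0.le hx0) hmx
      have hsb : s * b + y0 = m * b := by linear_combination b * hd_def - hdb
      have hsxy0 : s * x + y0 ≤ m * b := by
        have h1 : s * x ≤ s * b := mul_le_mul_of_nonneg_left hxb hs0
        linarith
      have hmby : m * b ≤ yv := by
        rw [← hmxv]; exact mul_le_mul_of_nonneg_left hbxv hm0.le
      refine ⟨⟨⟨hx0, le_trans hxxv hxv1.le⟩, ⟨hy0', by linarith⟩, ?_, ?_⟩, ?_⟩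
      · -- precision
        rw [ge_iff_le, ← hm]
        linarith [mul_le_mul_of_nonneg_left hmx hαP.le]
      · -- capacity
        have h4 : P * (m * xv) + N * xv = κ := by
          rw [hmxv, hyv_def, hxv_def]; field_simp; ring
        have h3 : P * (m * b) + N * b ≤ P * (m * xv) + N * xv := by
          linarith [mul_le_mul_of_nonneg_left hbxv (mul_nonneg hP.le hm0.le),
            mul_le_mul_of_nonneg_left hbxv hN.le]
        have h5 : P * y ≤ P * (s * x + y0) := mul_le_mul_of_nonneg_left hlt.le hP.le
        have h6 : P * (s * x + y0) + N * x ≤ P * (s * b + y0) + N * b := by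
          linarith [mul_le_mul_of_nonneg_left (mul_le_mul_of_nonneg_left hxb hs0) hP.le,
            mul_le_mul_of_nonneg_left hxb hN.le]
        have h7 : P * (s * b + y0) = P * (m * b) := by rw [hsb]
        linarith
      · -- cost
        have h8 : (1 - t) * y < (1 - t) * (s * x + y0) :=
          mul_lt_mul_of_pos_left hlt h1t
        linarith [heq]
  rw [hset, vol_aux m d b hd0 hb0]
  congr 1
  have hdD : d * ((1 - α) * P * (1 - t)) = α * N - (α * N + (1 - α) * P) * t := by
    linear_combination ((1 - α) * P * (1 - t)) * hd_def + (1 - t) * hm - (1 - α) * P * hs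
  have hky : (1 - t) * k - t * h = (1 - t) * y0 := by
    linear_combination h * hs - (1 - t) * hy0_def
  rw [hky, ← hdD, ← hdb]
  have hdne : d ≠ 0 := ne_of_gt hd0
  have hne1 : ((1:ℝ) - α) * P ≠ 0 := ne_of_gt hαP
  have hne2 : (1:ℝ) - t ≠ 0 := ne_of_gt h1t
  have hα1' : (1:ℝ) - α ≠ 0 := ne_of_gt (by linarith)
  field_simp
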